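/- For a finite rooted tree t with node u having parent w, the identity φ_t(u)·|θ_u t| = (|t| − |θ_u t|)·φ_t(w) holds, where φ_t is the centrality measure and θ_u t is the subtree rooted at u. -/
import Mathlib


open Finset
open scoped Classical

/-- A plane tree in the Ulam–Harris formalism: a finite set of words
containing the root, closed under parents, with children `u*0, …, u*(k-1)`. -/
def IsPlaneTree (t : Finset (List ℕ)) : Prop :=
  [] ∈ t ∧ (∀ u ∈ t, u ≠ [] → u.dropLast ∈ t) ∧
  (∀ u j k, u ++ [j] ∈ t → k ≤ j → u ++ [k] ∈ t)

/-- `subSize t v` is the number of nodes of the subtree of `t` rooted at `v`. -/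
noncomputable def subSize (t : Finset (List ℕ)) (v : List ℕ) : ℕ :=
  (t.filter (fun w => v <+: w)).card

/-- The centrality measure `φ_t(u)`. -/
noncomputable def phi (t : Finset (List ℕ)) (u : List ℕ) : ℝ :=
  (∏ v ∈ t.filter (fun v => ¬ v <+: u), (subSize t v : ℝ)) *
  (∏ v ∈ t.filter (fun v => v ≠ [] ∧ v <+: u), ((t.card : ℝ) - subSize t v))

/-- The competitive ratio `Φ(t) = φ_t(∅) / min_{u ∈ t} φ_t(u)`. -/
noncomputable def PhiRatio (t : Finset (List ℕ)) : ℝ :=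
  phi t [] / sInf (phi t '' ↑t)

theorem stmt1 (t : Finset (List ℕ)) (ht : IsPlaneTree t) (u : List ℕ) (hu : u ∈ t)
    (hne : u ≠ []) :
    phi t u * (subSize t u : ℝ) = ((t.card : ℝ) - subSize t u) * phi t u.dropLast := by
  set w := u.dropLast with hw
  have hud : w ++ [u.getLast hne] = u := List.dropLast_append_getLast hne
  have hnuw : ¬ u <+: w := by
    intro h
    have := h.length_le
    have hlen : w.length + 1 = u.length := by
      rw [← hud]; simp
    omega
  have hiff : ∀ v : List ℕ, v <+: u ↔ v <+: w ∨ v = u := by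
    intro v
    constructor
    · intro h
      rcases eq_or_ne v u with rfl | hvu
      · exact Or.inr rfl
      · left
        have hlt : v.length < u.length := lt_of_le_of_ne h.length_le
          (fun hl => hvu (List.IsPrefix.eq_of_length h hl))
        have hlen : w.length + 1 = u.length := by rw [← hud]; simp
        refine List.prefix_of_prefix_length_le h ?_ (by omega)
        rw [← hud]; exact (List.prefix_append _ _)
    · rintro (h | rfl)
      · exact h.trans (by rw [← hud]; exact List.prefix_append _ _)
      · exact List.prefix_refl _
  have h1 : t.filter (fun v => ¬ v <+: w) =
      insert u (t.filter (fun v => ¬ v <+: u)) := by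
    ext v
    simp only [Finset.mem_insert, Finset.mem_filter, hiff]
    constructor
    · rintro ⟨hv, hnv⟩
      rcases eq_or_ne v u with rfl | hvu
      · exact Or.inl rfl
      · exact Or.inr ⟨hv, fun h => h.elim hnv hvu⟩
    · rintro (rfl | ⟨hv, hnv⟩)
      · exact ⟨hu, hnuw⟩
      · exact ⟨hv, fun h => hnv (Or.inl h)⟩
  have h2 : t.filter (fun v => v ≠ [] ∧ v <+: u) =
      insert u (t.filter (fun v => v ≠ [] ∧ v <+: w)) := by
    ext v
    simp only [Finset.mem_insert, Finset.mem_filter, hiff]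
    constructor
    · rintro ⟨hv, hne', h | rfl⟩
      · exact Or.inr ⟨hv, hne', h⟩
      · exact Or.inl rfl
    · rintro (rfl | ⟨hv, hne', h⟩)
      · exact ⟨hu, hne, Or.inr rfl⟩
      · exact ⟨hv, hne', Or.inl h⟩
  have hu1 : u ∉ t.filter (fun v => ¬ v <+: u) := by
    simp [hu]
  have hu2 : u ∉ t.filter (fun v => v ≠ [] ∧ v <+: w) := by
    simp [hnuw]
  unfold phi
  rw [h2, Finset.prod_insert hu2]
  have : (∏ v ∈ t.filter (fun v => ¬ v <+: w), (subSize t v : ℝ)) =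
      (subSize t u : ℝ) * ∏ v ∈ t.filter (fun v => ¬ v <+: u), (subSize t v : ℝ) := by
    rw [h1, Finset.prod_insert hu1]
  rw [this]
  ring
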